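/- For every s ∈ (0,1/2) ∪ (1/2,1) and every h > 0, the weights w_k satisfy w_{-k} = w_k for all integers k ≥ 0, and w_k < 0 for every integer k with |k| ≥ 2. -/

import Mathlib

/-- The constant `c_{1,s-1} = -2^{2s-2}(s-1)Γ(s-1/2)/(π^{1/2}Γ(2-s))`. -/
noncomputable def c1m (s : ℝ) : ℝ :=
  -(2 : ℝ) ^ (2 * s - 2) * (s - 1) * Real.Gamma (s - 1 / 2) /
    (Real.sqrt Real.pi * Real.Gamma (2 - s))

/-- The hat function `φ̄₁(y) = 1 - |y|/h` for `|y| < h`, `0` otherwise. -/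
noncomputable def phiBar1 (h y : ℝ) : ℝ := if |y| < h then 1 - |y| / h else 0

/-- The weight `ω̄_k = c_{1,s-1} ∫_{-h}^{h} |kh - y|^{1-2s} φ̄₁(y) dy`. -/
noncomputable def omegaBar (s h : ℝ) (k : ℤ) : ℝ :=
  c1m s * ∫ y in (-h)..h, |(k : ℝ) * h - y| ^ (1 - 2 * s) * phiBar1 h y

/-- The weight `w_k = -(ω̄_{k-1} - 2ω̄_k + ω̄_{k+1})/h²`. -/
noncomputable def wgt (s h : ℝ) (k : ℤ) : ℝ :=
  -(omegaBar s h (k - 1) - 2 * omegaBar s h k + omegaBar s h (k + 1)) / h ^ 2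

lemma strictConvexOn_rpow_of_neg {p : ℝ} (hp : p < 0) :
    StrictConvexOn ℝ (Set.Ioi 0) fun x : ℝ => x ^ p := by
  apply strictConvexOn_of_deriv2_pos (convex_Ioi 0)
  · intro x hx
    exact (Real.continuousAt_rpow_const x p (Or.inl (ne_of_gt hx))).continuousWithinAt
  · intro x hx
    rw [interior_Ioi] at hx
    have h1 : deriv (fun x : ℝ => x ^ p) =ᶠ[nhds x] fun y => p * y ^ (p - 1) :=
      (isOpen_Ioi.eventually_mem hx).mono fun y hy =>
        (Real.hasDerivAt_rpow_const (Or.inl (ne_of_gt hy))).deriv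
    have h2 : deriv (deriv fun x : ℝ => x ^ p) x = p * ((p - 1) * x ^ (p - 1 - 1)) := by
      rw [h1.deriv_eq]
      exact ((Real.hasDerivAt_rpow_const (Or.inl (ne_of_gt hx))).const_mul p).deriv
    have h3 : deriv^[2] (fun x : ℝ => x ^ p) x = deriv (deriv fun x : ℝ => x ^ p) x := rfl
    rw [h3, h2]
    have h4 : (0:ℝ) < x ^ (p - 1 - 1) := Real.rpow_pos_of_pos hx _
    nlinarith [mul_pos (mul_pos_of_neg_of_neg hp (show p - 1 < 0 by linarith)) h4]

lemma conv_ineq {p a d : ℝ} (hp : p < 0) (ha : 0 < a) (hd : 0 < d) :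
    2 * (a + d) ^ p < a ^ p + (a + 2 * d) ^ p := by
  have key := (strictConvexOn_rpow_of_neg hp).2 (Set.mem_Ioi.mpr ha)
    (Set.mem_Ioi.mpr (show (0:ℝ) < a + 2 * d by linarith))
    (show a ≠ a + 2 * d by intro hc; linarith)
    (show (0:ℝ) < 1/2 by norm_num) (show (0:ℝ) < 1/2 by norm_num) (by norm_num)
  simp only [smul_eq_mul] at key
  rw [show (1/2 : ℝ) * a + (1/2 : ℝ) * (a + 2 * d) = a + d by ring] at key
  linarith

lemma conc_ineq {p a d : ℝ} (hp0 : 0 < p) (hp1 : p < 1) (ha : 0 < a) (hd : 0 < d) :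
    a ^ p + (a + 2 * d) ^ p < 2 * (a + d) ^ p := by
  have key := (Real.strictConcaveOn_rpow hp0 hp1).2 (Set.mem_Ici.mpr ha.le)
    (Set.mem_Ici.mpr (show (0:ℝ) ≤ a + 2 * d by linarith))
    (show a ≠ a + 2 * d by intro hc; linarith)
    (show (0:ℝ) < 1/2 by norm_num) (show (0:ℝ) < 1/2 by norm_num) (by norm_num)
  simp only [smul_eq_mul] at key
  rw [show (1/2 : ℝ) * a + (1/2 : ℝ) * (a + 2 * d) = a + d by ring] at key
  linarith

lemma omegaBar_neg (s h : ℝ) (k : ℤ) : omegaBar s h (-k) = omegaBar s h k := by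
  unfold omegaBar
  congr 1
  have step : ∀ y : ℝ, |((-k : ℤ) : ℝ) * h - y| ^ (1 - 2 * s) * phiBar1 h y
      = (fun y : ℝ => |(k : ℝ) * h - y| ^ (1 - 2 * s) * phiBar1 h y) (-y) := by
    intro y
    have h1 : ((-k : ℤ) : ℝ) * h - y = -((k : ℝ) * h - -y) := by push_cast; ring
    simp only [h1, abs_neg, phiBar1]
  calc (∫ y in (-h)..h, |((-k : ℤ) : ℝ) * h - y| ^ (1 - 2 * s) * phiBar1 h y)
      = ∫ y in (-h)..h,
          (fun y : ℝ => |(k : ℝ) * h - y| ^ (1 - 2 * s) * phiBar1 h y) (-y) := by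
        exact intervalIntegral.integral_congr fun y _ => step y
    _ = ∫ y in (-h)..h, |(k : ℝ) * h - y| ^ (1 - 2 * s) * phiBar1 h y := by
        have := intervalIntegral.integral_comp_neg (a := -h) (b := h)
          (f := fun y : ℝ => |(k : ℝ) * h - y| ^ (1 - 2 * s) * phiBar1 h y)
        simpa using this

lemma wgt_neg (s h : ℝ) (k : ℤ) : wgt s h (-k) = wgt s h k := by
  unfold wgt
  rw [show (-k - 1 : ℤ) = -(k + 1) by ring, show (-k + 1 : ℤ) = -(k - 1) by ring,
    omegaBar_neg, omegaBar_neg, omegaBar_neg]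
  ring

lemma omegaBar_eq (s h : ℝ) (hh : 0 < h) (j : ℤ) (hj : 1 ≤ j) :
    omegaBar s h j
      = c1m s * ∫ y in (-h)..h, ((j : ℝ) * h - y) ^ (1 - 2 * s) * (1 - |y| / h) := by
  unfold omegaBar
  congr 1
  apply intervalIntegral.integral_congr
  intro y hy
  rw [Set.uIcc_of_le (by linarith : -h ≤ h)] at hy
  obtain ⟨hy1, hy2⟩ := hy
  have hjr : (1 : ℝ) ≤ (j : ℝ) := by exact_mod_cast hj
  have habs : |(j : ℝ) * h - y| = (j : ℝ) * h - y := abs_of_nonneg (by nlinarith)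
  show |(j : ℝ) * h - y| ^ (1 - 2 * s) * phiBar1 h y
      = ((j : ℝ) * h - y) ^ (1 - 2 * s) * (1 - |y| / h)
  rw [habs]
  congr 1
  have hylt : |y| ≤ h := abs_le.mpr ⟨hy1, hy2⟩
  unfold phiBar1
  by_cases hc : |y| < h
  · simp [hc]
  · have : |y| = h := le_antisymm hylt (not_lt.mp hc)
    rw [if_neg hc, this]
    field_simp
    norm_num

set_option maxHeartbeats 1000000 in
lemma wgt_neg_of_two_le (s : ℝ) (hs : s ∈ Set.Ioo (0 : ℝ) (1 / 2) ∪ Set.Ioo (1 / 2 : ℝ) 1)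
    (h : ℝ) (hh : 0 < h) (k : ℤ) (hk : 2 ≤ k) : wgt s h k < 0 := by
  have hs0 : 0 < s := by rcases hs with h' | h' <;> [exact h'.1; linarith [h'.1]]
  have hs1 : s < 1 := by rcases hs with h' | h' <;> [linarith [h'.2]; exact h'.2]
  set p : ℝ := 1 - 2 * s with hp_def
  have hp1 : (-1 : ℝ) < p := by simp only [hp_def]; linarith
  have hp2 : p < 1 := by simp only [hp_def]; linarith
  -- integrability of the basic pieces
  have hw_cont : Continuous fun y : ℝ => 1 - |y| / h :=
    continuous_const.sub (continuous_abs.div_const h)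
  have hInt : ∀ c : ℝ,
      IntervalIntegrable (fun y : ℝ => (c - y) ^ p * (1 - |y| / h)) MeasureTheory.volume (-h) h := by
    intro c
    have base : IntervalIntegrable (fun x : ℝ => x ^ p) MeasureTheory.volume (c - -h) (c - h) :=
      intervalIntegral.intervalIntegrable_rpow' hp1
    have comp := (intervalIntegral.intervalIntegrable_rpow' (a := c - -h) (b := c - h)
      hp1).comp_sub_left c
    simp only [sub_sub_cancel] at comp
    exact comp.mul_continuousOn hw_cont.continuousOn
  set c1 : ℝ := ((k - 1 : ℤ) : ℝ) * h with hc1_def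
  have hc2 : ((k : ℤ) : ℝ) * h = c1 + h := by simp only [hc1_def]; push_cast; ring
  have hc3 : ((k + 1 : ℤ) : ℝ) * h = c1 + 2 * h := by simp only [hc1_def]; push_cast; ring
  have hkr : (2 : ℝ) ≤ (k : ℝ) := by exact_mod_cast hk
  have hhc1 : h ≤ c1 := by
    have : (1 : ℝ) ≤ ((k - 1 : ℤ) : ℝ) := by push_cast; linarith
    simp only [hc1_def]; nlinarith
  -- rewrite the three omegaBar values
  have e1 : omegaBar s h (k - 1)
      = c1m s * ∫ y in (-h)..h, (c1 - y) ^ p * (1 - |y| / h) :=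
    omegaBar_eq s h hh (k - 1) (by omega)
  have e2 : omegaBar s h k
      = c1m s * ∫ y in (-h)..h, (c1 + h - y) ^ p * (1 - |y| / h) := by
    rw [omegaBar_eq s h hh k (by omega)]
    simp only [hc2, hp_def]
  have e3 : omegaBar s h (k + 1)
      = c1m s * ∫ y in (-h)..h, (c1 + 2 * h - y) ^ p * (1 - |y| / h) := by
    rw [omegaBar_eq s h hh (k + 1) (by omega)]
    simp only [hc3, hp_def]
  set g : ℝ → ℝ := fun y =>
    (c1 - y) ^ p * (1 - |y| / h) - 2 * ((c1 + h - y) ^ p * (1 - |y| / h))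
      + (c1 + 2 * h - y) ^ p * (1 - |y| / h) with hg_def
  have hg_int : IntervalIntegrable g MeasureTheory.volume (-h) h :=
    ((hInt c1).sub ((hInt (c1 + h)).const_mul 2)).add (hInt (c1 + 2 * h))
  set J : ℝ := ∫ y in (-h)..h, g y with hJ_def
  have hsplit : J = (∫ y in (-h)..h, (c1 - y) ^ p * (1 - |y| / h))
      - 2 * (∫ y in (-h)..h, (c1 + h - y) ^ p * (1 - |y| / h))
      + ∫ y in (-h)..h, (c1 + 2 * h - y) ^ p * (1 - |y| / h) := by
    simp only [hJ_def, hg_def]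
    rw [intervalIntegral.integral_add ((hInt c1).sub ((hInt (c1 + h)).const_mul 2))
      (hInt (c1 + 2 * h)),
      intervalIntegral.integral_sub (hInt c1) ((hInt (c1 + h)).const_mul 2),
      intervalIntegral.integral_const_mul]
  have hwgt : wgt s h k = -(c1m s * J) / h ^ 2 := by
    unfold wgt
    rw [e1, e2, e3, hsplit]
    ring
  -- pointwise analysis
  have hpt : ∀ y ∈ Set.Ioo (-h) h,
      0 < c1 - y ∧ 0 < 1 - |y| / h ∧
      g y = ((c1 - y) ^ p - 2 * ((c1 - y) + h) ^ p + ((c1 - y) + 2 * h) ^ p)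
        * (1 - |y| / h) := by
    intro y hy
    obtain ⟨hy1, hy2⟩ := hy
    refine ⟨by linarith, ?_, ?_⟩
    · have : |y| < h := abs_lt.mpr ⟨hy1, hy2⟩
      have := (div_lt_one hh).mpr this
      linarith
    · simp only [hg_def]
      rw [show c1 + h - y = (c1 - y) + h by ring, show c1 + 2 * h - y = (c1 - y) + 2 * h by ring]
      ring
  have hmain : 0 < c1m s * J := by
    rcases hs with hcase | hcase
    · -- s < 1/2 : p ∈ (0,1), concave, c1m < 0, J < 0
      have hp0 : 0 < p := by simp only [hp_def]; linarith [hcase.2]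
      have hJneg : J < 0 := by
        have hpos : 0 < ∫ y in (-h)..h, -g y := by
          apply intervalIntegral.intervalIntegral_pos_of_pos_on hg_int.neg
          · intro y hy
            obtain ⟨ha, hw, hgy⟩ := hpt y hy
            simp only [Pi.neg_apply]
            rw [hgy]
            have hkey := conc_ineq hp0 hp2 ha hh (a := c1 - y) (d := h)
            nlinarith [mul_pos (show 0 < 2 * (c1 - y + h) ^ p - (c1 - y) ^ p
              - (c1 - y + 2 * h) ^ p by linarith) hw]
          · linarith
        rw [intervalIntegral.integral_neg] at hpos
        simp only [hJ_def]
        linarith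
      have hGneg : Real.Gamma (s - 1 / 2) < 0 := by
        have hne : s - 1 / 2 ≠ 0 := by intro hc; linarith [hcase.2]
        have h1 : Real.Gamma (s - 1 / 2 + 1) = (s - 1 / 2) * Real.Gamma (s - 1 / 2) :=
          Real.Gamma_add_one hne
        have h2 : 0 < Real.Gamma (s - 1 / 2 + 1) := Real.Gamma_pos_of_pos (by linarith [hcase.1])
        nlinarith [hcase.2]
      have hc1m : c1m s < 0 := by
        have hrw : c1m s = (2 : ℝ) ^ (2 * s - 2) * (1 - s) * Real.Gamma (s - 1 / 2)
            / (Real.sqrt Real.pi * Real.Gamma (2 - s)) := by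
          unfold c1m; ring
        rw [hrw]
        apply div_neg_of_neg_of_pos
        · have h2p : (0:ℝ) < (2 : ℝ) ^ (2 * s - 2) := Real.rpow_pos_of_pos (by norm_num : (0:ℝ) < 2) _
          exact mul_neg_of_pos_of_neg (mul_pos h2p (by linarith)) hGneg
        · exact mul_pos (Real.sqrt_pos.mpr Real.pi_pos)
            (Real.Gamma_pos_of_pos (by linarith))
      exact mul_pos_of_neg_of_neg hc1m hJneg
    · -- s > 1/2 : p < 0, convex, c1m > 0, J > 0
      have hp0 : p < 0 := by simp only [hp_def]; linarith [hcase.1]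
      have hJpos : 0 < J := by
        apply intervalIntegral.intervalIntegral_pos_of_pos_on hg_int
        · intro y hy
          obtain ⟨ha, hw, hgy⟩ := hpt y hy
          rw [hgy]
          have hkey := conv_ineq hp0 ha hh (a := c1 - y) (d := h)
          nlinarith [mul_pos (show 0 < (c1 - y) ^ p - 2 * (c1 - y + h) ^ p
            + (c1 - y + 2 * h) ^ p by linarith) hw]
        · linarith
      have hc1m : 0 < c1m s := by
        have hrw : c1m s = (2 : ℝ) ^ (2 * s - 2) * (1 - s) * Real.Gamma (s - 1 / 2)
            / (Real.sqrt Real.pi * Real.Gamma (2 - s)) := by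
          unfold c1m; ring
        rw [hrw]
        apply div_pos
        · exact mul_pos (mul_pos (Real.rpow_pos_of_pos (by norm_num : (0:ℝ) < 2) _) (by linarith))
            (Real.Gamma_pos_of_pos (by linarith [hcase.1]))
        · exact mul_pos (Real.sqrt_pos.mpr Real.pi_pos)
            (Real.Gamma_pos_of_pos (by linarith))
      exact mul_pos hc1m hJpos
  rw [hwgt]
  have h2 : (0:ℝ) < h ^ 2 := by positivity
  have := div_pos hmain h2
  rw [neg_div]
  linarith

/-- for every admissible  and , the weights satisfy
 for all  and  whenever . -/
theorem stmt4 (s : ℝ) (hs : s ∈ Set.Ioo (0 : ℝ) (1 / 2) ∪ Set.Ioo (1 / 2 : ℝ) 1)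
    (h : ℝ) (hh : 0 < h) :
    (∀ k : ℕ, wgt s h (-(k : ℤ)) = wgt s h (k : ℤ)) ∧
    (∀ k : ℤ, 2 ≤ |k| → wgt s h k < 0) := by
  constructor
  · intro k; exact wgt_neg s h k
  · intro k hk
    rcases le_abs.mp hk with h1 | h1
    · exact wgt_neg_of_two_le s hs h hh k h1
    · have : wgt s h k = wgt s h (-k) := by rw [← wgt_neg s h (-k), neg_neg]
      rw [this]
      exact wgt_neg_of_two_le s hs h hh (-k) (by omega)
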